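/- The automorphism group of H(ℂ), the Fréchet algebra of entire functions with the topology of uniform convergence on compact subsets, is not topologically reflexive: the continuous linear operator ψ defined by ψ(f) = f(0)·1 (the constant function with value f(0)) satisfies that ψ(f) lies in the closure of { χ(f) : χ a continuous algebra automorphism of H(ℂ) } for every entire function f, yet ψ is not an automorphism (it is not injective). -/

import Mathlib

set_option synthInstance.maxHeartbeats 1000000

noncomputable def entireAlg : Subalgebra ℂ C(ℂ, ℂ) where
  carrier := {f | Differentiable ℂ ⇑f}
  add_mem' := by
    intro f g hf hg
    simpa using hf.add hg
  mul_mem' := by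
    intro f g hf hg
    simpa using hf.mul hg
  one_mem' := by
    show Differentiable ℂ ⇑(1 : C(ℂ, ℂ))
    rw [ContinuousMap.coe_one]
    exact differentiable_const (1 : ℂ)
  zero_mem' := by
    show Differentiable ℂ ⇑(0 : C(ℂ, ℂ))
    rw [ContinuousMap.coe_zero]
    exact differentiable_const (0 : ℂ)
  algebraMap_mem' := fun c => by
    show Differentiable ℂ ⇑(algebraMap ℂ C(ℂ, ℂ) c)
    have : ⇑(algebraMap ℂ C(ℂ, ℂ) c) = fun _ : ℂ => c := rfl
    rw [this]
    exact differentiable_const c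

/-- multiplication by `a` as a continuous map. -/
noncomputable def mulMap (a : ℂ) : C(ℂ, ℂ) := ⟨fun z => a * z, by fun_prop⟩

@[simp] lemma mulMap_apply (a z : ℂ) : mulMap a z = a * z := rfl

/-- precomposition with `mulMap a` as an algebra hom of entireAlg. -/
noncomputable def compHom (a : ℂ) : entireAlg →ₐ[ℂ] entireAlg where
  toFun f := ⟨(f : C(ℂ, ℂ)).comp (mulMap a), by
    have hf : Differentiable ℂ ⇑(f : C(ℂ, ℂ)) := f.2
    exact hf.comp ((differentiable_id.const_mul a))⟩
  map_one' := by ext z; simp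
  map_mul' f g := by ext z; simp
  map_zero' := by ext z; simp
  map_add' f g := by ext z; simp
  commutes' c := by ext z; simp [Algebra.algebraMap_eq_smul_one]

lemma compHom_apply (a : ℂ) (f : entireAlg) (z : ℂ) :
    ((compHom a f : entireAlg) : C(ℂ, ℂ)) z = (f : C(ℂ, ℂ)) (a * z) := rfl

lemma continuous_compHom (a : ℂ) : Continuous (compHom a) := by
  have h1 : Continuous (fun g : C(ℂ, ℂ) => g.comp (mulMap a)) :=
    ContinuousMap.continuous_precomp (mulMap a)
  apply Continuous.subtype_mk
  exact h1.comp continuous_subtype_val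

noncomputable def compEquiv (a : ℂ) (ha : a ≠ 0) : entireAlg ≃ₐ[ℂ] entireAlg :=
  { compHom a with
    invFun := compHom a⁻¹
    left_inv := by
      intro f
      apply Subtype.ext
      ext z
      show (f : C(ℂ, ℂ)) (a * (a⁻¹ * z)) = (f : C(ℂ, ℂ)) z
      rw [← mul_assoc, mul_inv_cancel₀ ha, one_mul]
    right_inv := by
      intro f
      apply Subtype.ext
      ext z
      show (f : C(ℂ, ℂ)) (a⁻¹ * (a * z)) = (f : C(ℂ, ℂ)) z
      rw [← mul_assoc, inv_mul_cancel₀ ha, one_mul] }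

theorem entire_automorphism_group_not_topologically_reflexive :
    ∃ ψ : entireAlg →L[ℂ] entireAlg,
      (∀ (f : entireAlg) (z : ℂ), (ψ f : C(ℂ, ℂ)) z = (f : C(ℂ, ℂ)) 0) ∧
      (∀ f : entireAlg,
        ψ f ∈ closure {g : entireAlg | ∃ χ : entireAlg ≃ₐ[ℂ] entireAlg,
          Continuous χ ∧ Continuous χ.symm ∧ g = χ f}) ∧
      ¬ Function.Injective ψ := by
  -- evaluation at 0 as a continuous linear map
  have heval : Continuous (fun f : entireAlg => (f : C(ℂ, ℂ)) 0) :=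
    (continuous_eval_const 0).comp continuous_subtype_val
  set eval0 : entireAlg →L[ℂ] ℂ :=
    { toFun := fun f => (f : C(ℂ, ℂ)) 0
      map_add' := fun f g => rfl
      map_smul' := fun c f => rfl
      cont := heval } with heval0
  refine ⟨eval0.smulRight (1 : entireAlg), ?_, ?_, ?_⟩
  · intro f z
    show (((f : C(ℂ, ℂ)) 0) • (1 : entireAlg) : entireAlg).1 z = (f : C(ℂ, ℂ)) 0
    simp
  · intro f
    -- the sequence χ_n f with χ_n = compEquiv (n+1)⁻¹
    have hne : ∀ n : ℕ, ((n : ℂ) + 1)⁻¹ ≠ 0 := by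
      intro n
      simp [Nat.cast_add_one_ne_zero]
    refine mem_closure_of_tendsto (f := fun n : ℕ => compEquiv ((n : ℂ) + 1)⁻¹ (hne n) f)
      (b := Filter.atTop) ?_ ?_
    · -- tendsto
      rw [Topology.IsEmbedding.tendsto_nhds_iff Topology.IsEmbedding.subtypeVal]
      have key : Filter.Tendsto (fun n : ℕ => mulMap ((n : ℂ) + 1)⁻¹) Filter.atTop
          (nhds (ContinuousMap.const ℂ (0 : ℂ))) := by
        rw [ContinuousMap.tendsto_iff_forall_isCompact_tendstoUniformlyOn]
        intro K hK
        obtain ⟨C, hC⟩ := hK.exists_bound_of_continuousOn continuous_id.continuousOn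
        rw [Metric.tendstoUniformlyOn_iff]
        intro ε hε
        set C' := max C 0 with hC'def
        have hC0 : 0 ≤ C' := le_max_right _ _
        have hC' : ∀ x ∈ K, ‖x‖ ≤ C' := fun x hx => le_trans (hC x hx) (le_max_left _ _)
        have hCt : Filter.Tendsto (fun n : ℕ => C' / ((n + 1 : ℕ) : ℝ)) Filter.atTop
            (nhds 0) :=
          (tendsto_const_div_atTop_nhds_zero_nat C').comp (Filter.tendsto_add_atTop_nat 1)
        filter_upwards [hCt.eventually (gt_mem_nhds hε)] with n hn z hz
        have h1 : dist (ContinuousMap.const ℂ (0 : ℂ) z) (mulMap ((n : ℂ) + 1)⁻¹ z)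
            = ‖((n : ℂ) + 1)⁻¹‖ * ‖z‖ := by
          simp [dist_eq_norm]
        have h2 : ‖((n : ℂ) + 1)⁻¹‖ = (((n : ℝ) + 1))⁻¹ := by
          rw [show ((n : ℂ) + 1) = (((n + 1 : ℕ) : ℂ)) by push_cast; ring, norm_inv,
            Complex.norm_natCast]
          push_cast
          ring
        have hpos : (0 : ℝ) < (n : ℝ) + 1 := by positivity
        have h3 : (((n : ℝ) + 1))⁻¹ * ‖z‖ ≤ C' / ((n : ℝ) + 1) := by
          rw [div_eq_inv_mul]
          exact mul_le_mul_of_nonneg_left (hC' z hz) (by positivity)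
        calc dist (ContinuousMap.const ℂ (0 : ℂ) z) (mulMap ((n : ℂ) + 1)⁻¹ z)
            = (((n : ℝ) + 1))⁻¹ * ‖z‖ := by rw [h1, h2]
          _ ≤ C' / ((n : ℝ) + 1) := h3
          _ < ε := by push_cast at hn; exact hn
      have hcont : Continuous (fun g : C(ℂ, ℂ) => (f : C(ℂ, ℂ)).comp g) :=
        ContinuousMap.continuous_postcomp _
      have := (hcont.tendsto _).comp key
      convert this using 2 with n
      all_goals first
        | rfl
        | (ext z; simp [heval0])
    · filter_upwards with n
      exact ⟨compEquiv _ (hne n), continuous_compHom _, continuous_compHom _, rfl⟩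
  · intro hinj
    have h1 : (⟨ContinuousMap.id ℂ, differentiable_id⟩ : entireAlg) ≠ 0 := by
      intro h
      have := congrArg (fun g : entireAlg => (g : C(ℂ, ℂ)) 1) h
      simpa using this
    apply h1
    apply hinj
    apply Subtype.ext
    ext z
    simp [heval0]
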